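/- For all n ≥ 3, the poset of bicolored Lyndon forests FLyn_n^w and Reiner's poset of rooted spanning forests SF_n are not isomorphic as posets. -/

import Mathlib

open Finset

open scoped BigOperators Classical

/-! ## Generic machinery for edge labelings of posets presented by cover relations -/

section Chains

variable {α : Type*} {L : Type*}

/-- The word of labels read along a list of poset elements. -/
def wordOf (lab : α → α → L) : List α → List L
  | x :: y :: rest => lab x y :: wordOf lab (y :: rest)
  | _ => []

/-- `c` is a saturated chain from `x` to `y` with respect to the cover relation `cov`;
in a graded poset these are exactly the maximal chains of the interval `[x, y]`. -/
def IsSatChain (cov : α → α → Prop) (x y : α) (c : List α) : Prop :=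
  c.Chain' cov ∧ c.head? = some x ∧ c.getLast? = some y

/-- A word of labels is increasing if consecutive labels strictly increase. -/
def IncWord (lt : L → L → Prop) (w : List L) : Prop := w.Chain' lt

/-- A word of labels is ascent-free if no consecutive pair of labels strictly increases. -/
def AscFree (lt : L → L → Prop) (w : List L) : Prop := w.Chain' fun a b => ¬ lt a b

/-- The partial order generated by a cover relation. -/
def leOf (cov : α → α → Prop) : α → α → Prop := Relation.ReflTransGen cov

/-- The strict order generated by a cover relation. -/
def ltOf (cov : α → α → Prop) (a b : α) : Prop := leOf cov a b ∧ a ≠ b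

/-- An ER-labeling: every closed interval has a unique increasing maximal chain. -/
def IsERLabeling (cov : α → α → Prop) (lab : α → α → L) (lt : L → L → Prop) : Prop :=
  ∀ x y, leOf cov x y → ∃! c, IsSatChain cov x y c ∧ IncWord lt (wordOf lab c)

/-- The rank two switching property: in every rank-two interval whose increasing chain
has word of labels `ab`, there is a unique chain with word of labels `ba`. -/
def RankTwoSwitch (cov : α → α → Prop) (lab : α → α → L) (lt : L → L → Prop) : Prop :=
  ∀ x y c a b, IsSatChain cov x y c → IncWord lt (wordOf lab c) → wordOf lab c = [a, b] →
    ∃! c', IsSatChain cov x y c' ∧ wordOf lab c' = [b, a]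

/-- In every interval, distinct ascent-free maximal chains have distinct label words. -/
def AscFreeInj (cov : α → α → Prop) (lab : α → α → L) (lt : L → L → Prop) : Prop :=
  ∀ x y c c', IsSatChain cov x y c → IsSatChain cov x y c' →
    AscFree lt (wordOf lab c) → AscFree lt (wordOf lab c') →
    wordOf lab c = wordOf lab c' → c = c'

/-- An EW-labeling. -/
def IsEWLabeling (cov : α → α → Prop) (lab : α → α → L) (lt : L → L → Prop) : Prop :=
  IsERLabeling cov lab lt ∧ RankTwoSwitch cov lab lt ∧ AscFreeInj cov lab lt

/-- An EL-labeling: every closed interval has a unique increasing maximal chain,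
which lexicographically precedes every other maximal chain of the interval. -/
def IsELLabeling (cov : α → α → Prop) (lab : α → α → L) (lt : L → L → Prop) : Prop :=
  ∀ x y, leOf cov x y →
    ∃ c, (IsSatChain cov x y c ∧ IncWord lt (wordOf lab c)) ∧
      ∀ c', IsSatChain cov x y c' → c' ≠ c →
        ¬ IncWord lt (wordOf lab c') ∧ List.Lex lt (wordOf lab c) (wordOf lab c')

end Chains

/-! ## Möbius functions and Whitney numbers -/

section Whitney

variable {α : Type*} {β : Type*}

/-- Auxiliary Möbius function computed with fuel; for an element of rank `k` of a
graded poset, fuel `k` computes the one-variable Möbius function `μ(0̂, ·)`. -/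
noncomputable def muAux (ltr : α → α → Prop) (bot : α) : ℕ → α → ℤ
  | 0, x => if x = bot then 1 else 0
  | k + 1, x => if x = bot then 1 else - ∑ᶠ (y : α) (_ : ltr y x), muAux ltr bot k y

/-- The one-variable Möbius function `μ(0̂, x)` of a graded poset presented by its
cover relation `cov`, minimum `bot` and rank function `rk`. -/
noncomputable def muBot (cov : α → α → Prop) (bot : α) (rk : α → ℕ) (x : α) : ℤ :=
  muAux (ltOf cov) bot (rk x) x

/-- The `k`-th Whitney number of the first kind. -/
noncomputable def whitney1 (cov : α → α → Prop) (bot : α) (rk : α → ℕ) (k : ℕ) : ℤ :=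
  ∑ᶠ (x : α) (_ : rk x = k), muBot cov bot rk x

/-- The `k`-th Whitney number of the second kind. -/
noncomputable def whitney2 (rk : α → ℕ) (k : ℕ) : ℕ :=
  Nat.card {x : α // rk x = k}

/-- Two graded posets are Whitney duals if their Whitney numbers of the first and second
kind are swapped (up to sign). -/
def IsWhitneyDual (covP : α → α → Prop) (botP : α) (rkP : α → ℕ)
    (covQ : β → β → Prop) (botQ : β) (rkQ : β → ℕ) : Prop :=
  ∀ k, (whitney1 covP botP rkP k).natAbs = whitney2 rkQ k ∧
       (whitney1 covQ botQ rkQ k).natAbs = whitney2 rkP k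

/-- Two graded posets are Whitney twins if they have the same Whitney numbers of the first
and of the second kind. -/
def IsWhitneyTwin (covP : α → α → Prop) (botP : α) (rkP : α → ℕ)
    (covQ : β → β → Prop) (botQ : β) (rkQ : β → ℕ) : Prop :=
  ∀ k, whitney1 covP botP rkP k = whitney1 covQ botQ rkQ k ∧ whitney2 rkP k = whitney2 rkQ k

/-- `(cov, bot, rk)` presents a graded poset with minimum `bot`. -/
def IsGradedPoset (cov : α → α → Prop) (bot : α) (rk : α → ℕ) : Prop :=
  (∀ x, leOf cov bot x) ∧ rk bot = 0 ∧ ∀ x y, cov x y → rk y = rk x + 1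

/-- A graded poset has a Whitney dual. -/
def HasWhitneyDual {γ : Type} (cov : γ → γ → Prop) (bot : γ) (rk : γ → ℕ) : Prop :=
  ∃ (β : Type) (_ : Finite β) (covQ : β → β → Prop) (botQ : β) (rkQ : β → ℕ),
    IsGradedPoset covQ botQ rkQ ∧ IsWhitneyDual cov bot rk covQ botQ rkQ

/-- Isomorphism of the posets generated by two cover relations. -/
def CovPosetIso (covP : α → α → Prop) (covQ : β → β → Prop) : Prop :=
  ∃ e : α ≃ β, ∀ x y, leOf covP x y ↔ leOf covQ (e x) (e y)

end Whitney

/-! ## The label posets `Λₙʷ` and `Λₙ•` (strict order relations)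

Labels are triples `(a, b, u)` with `a < b` in `[n]` and `u ∈ {0,1}` (encoded as `Bool`). -/

/-- The strict order of `Λₙʷ = Γ₁ ⊕ ⋯ ⊕ Γ_{n-1}` where `Γ_a` carries the product order
`(a,b)ᵘ ≤ (a,c)ᵛ ↔ b ≤ c ∧ u ≤ v`. -/
def ltLw (x y : ℕ × ℕ × Bool) : Prop :=
  x.1 < y.1 ∨ (x.1 = y.1 ∧ x.2.1 ≤ y.2.1 ∧ x.2.2 ≤ y.2.2 ∧ x.2 ≠ y.2)

/-- The strict order of `Λₙ• = A₁ ⊕ C₁ ⊕ ⋯ ⊕ A_{n-1} ⊕ C_{n-1}` where `A_a` is the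
antichain of the `(a,b)⁰` and `C_a` is the chain of the `(a,b)¹` ordered by `b`. -/
def ltLp (x y : ℕ × ℕ × Bool) : Prop :=
  x.1 < y.1 ∨ (x.1 = y.1 ∧
    ((x.2.2 = false ∧ y.2.2 = true) ∨ (x.2.2 = true ∧ y.2.2 = true ∧ x.2.1 < y.2.1)))

/-! ## Pointed and weighted partition posets -/

/-- The minimum of a finite set of naturals (`0` for the empty set). -/
def minB (B : Finset ℕ) : ℕ := WithTop.untopD 0 B.min

/-- Pointed partitions of the ground set `A`: partitions of `A` into blocks, each block
carrying a distinguished (pointed) element.  A pointed block is a pair `(B, p)` with `p ∈ B`. -/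
abbrev PPart (A : Finset ℕ) : Type :=
  {π : Finset (Finset ℕ × ℕ) //
    (∀ b ∈ π, b.2 ∈ b.1) ∧
    (∀ b ∈ π, ∀ b' ∈ π, b ≠ b' → Disjoint b.1 b'.1) ∧
    π.biUnion Prod.fst = A}

/-- The cover relation of the pointed partition poset: merge two pointed blocks, the merged
block being pointed at the pointed element of one of the two. -/
def covPP {A : Finset ℕ} (π π' : PPart A) : Prop :=
  ∃ b1 ∈ π.1, ∃ b2 ∈ π.1, minB b1.1 < minB b2.1 ∧
    ∃ p : ℕ, (p = b1.2 ∨ p = b2.2) ∧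
      π'.1 = insert (b1.1 ∪ b2.1, p) ((π.1.erase b1).erase b2)

/-- The labeling `λ•` (as a bare label map): the cover `u`-merging blocks `A, B` with
`min A < min B` gets the label `(min A, min B, u)`, where `u = 1` exactly when the merged
block is pointed at the pointed element of `A`. -/
noncomputable def labPP {A : Finset ℕ} (π π' : PPart A) : ℕ × ℕ × Bool :=
  let olds := π.1 \ π'.1
  let mins := olds.image (fun b => minB b.1)
  (WithTop.untopD 0 mins.min, WithBot.unbotD 0 mins.max,
    if ∃ b ∈ olds, minB b.1 = WithTop.untopD 0 mins.min ∧ ∃ d ∈ π'.1 \ π.1, d.2 = b.2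
      then true else false)

/-- The minimum of the pointed partition poset: all blocks are pointed singletons. -/
def botPP (A : Finset ℕ) : PPart A :=
  ⟨A.image fun i => ({i}, i), by
    refine ⟨?_, ?_, ?_⟩
    · intro b hb
      obtain ⟨i, -, rfl⟩ := Finset.mem_image.1 hb
      exact Finset.mem_singleton_self i
    · intro b hb b' hb' hne
      obtain ⟨i, -, rfl⟩ := Finset.mem_image.1 hb
      obtain ⟨j, -, rfl⟩ := Finset.mem_image.1 hb'
      have hij : i ≠ j := fun h => hne (by rw [h])
      simp [Finset.disjoint_left, hij]
    · ext x
      simp⟩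

/-- The rank function of the pointed partition poset. -/
def rkPP {A : Finset ℕ} (π : PPart A) : ℕ := A.card - π.1.card

/-- Weighted partitions of the ground set `A`: partitions of `A` into blocks, each block `B`
carrying a weight `v` with `0 ≤ v ≤ |B| - 1`. -/
abbrev WPart (A : Finset ℕ) : Type :=
  {π : Finset (Finset ℕ × ℕ) //
    (∀ b ∈ π, b.2 < b.1.card) ∧
    (∀ b ∈ π, ∀ b' ∈ π, b ≠ b' → Disjoint b.1 b'.1) ∧
    π.biUnion Prod.fst = A}

/-- The cover relation of the weighted partition poset: merge blocks `A^v, B^w` into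
`(A ∪ B)^(v+w+u)` for some `u ∈ {0,1}`. -/
def covWP {A : Finset ℕ} (π π' : WPart A) : Prop :=
  ∃ b1 ∈ π.1, ∃ b2 ∈ π.1, minB b1.1 < minB b2.1 ∧ ∃ u : Bool,
    π'.1 = insert (b1.1 ∪ b2.1, b1.2 + b2.2 + (if u then 1 else 0)) ((π.1.erase b1).erase b2)

/-- The labeling `λ_w` (as a bare label map): the cover merging `A^v, B^w` with
`min A < min B` into `(A ∪ B)^(v+w+u)` gets the label `(min A, min B, u)`. -/
noncomputable def labWP {A : Finset ℕ} (π π' : WPart A) : ℕ × ℕ × Bool :=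
  let olds := π.1 \ π'.1
  let mins := olds.image (fun b => minB b.1)
  (WithTop.untopD 0 mins.min, WithBot.unbotD 0 mins.max,
    if (π'.1 \ π.1).sum Prod.snd = olds.sum Prod.snd + 1 then true else false)

/-- The minimum of the weighted partition poset: all blocks singletons of weight `0`. -/
def botWP (A : Finset ℕ) : WPart A :=
  ⟨A.image fun i => ({i}, 0), by
    refine ⟨?_, ?_, ?_⟩
    · intro b hb
      obtain ⟨i, -, rfl⟩ := Finset.mem_image.1 hb
      simp
    · intro b hb b' hb' hne
      obtain ⟨i, -, rfl⟩ := Finset.mem_image.1 hb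
      obtain ⟨j, -, rfl⟩ := Finset.mem_image.1 hb'
      have hij : i ≠ j := fun h => hne (by rw [h])
      simp [Finset.disjoint_left, hij]
    · ext x
      simp⟩

/-- The rank function of the weighted partition poset. -/
def rkWP {A : Finset ℕ} (π : WPart A) : ℕ := A.card - π.1.card
/-! ## Bicolored binary trees and Lyndon forests -/

/-- Planar binary trees with `ℕ`-labeled leaves and `Bool`-colored internal vertices
(`false` = color 0, `true` = color 1). -/
inductive BT : Type
  | leaf : ℕ → BT
  | node : Bool → BT → BT → BT
deriving DecidableEq

namespace BT

/-- The valency: the minimum leaf label of a tree. -/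
def nu : BT → ℕ
  | leaf a => a
  | node _ l r => min l.nu r.nu

/-- The set of leaf labels of a tree. -/
def leaves : BT → Finset ℕ
  | leaf a => {a}
  | node _ l r => l.leaves ∪ r.leaves

/-- The number of internal vertices of a tree. -/
def internals : BT → ℕ
  | leaf _ => 0
  | node _ l r => l.internals + r.internals + 1

/-- A tree is normalized if its leaf labels are distinct and every internal vertex has the
same valency as its left child. -/
def normalized : BT → Prop
  | leaf _ => True
  | node _ l r => l.normalized ∧ r.normalized ∧ Disjoint l.leaves r.leaves ∧ l.nu < r.nu

/-- The pointed Lyndon condition: at every internal vertex `v` with internal left child,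
`color (L v) ≥ color v`, and if `color (L v) = color v = 1` then `v` is a Lyndon vertex,
i.e. `ν (R (L v)) > ν (R v)`. -/
def pLyn : BT → Prop
  | leaf _ => True
  | node c l r => l.pLyn ∧ r.pLyn ∧
      (match l with
       | leaf _ => True
       | node c' _ r' => c ≤ c' ∧ ((c' = c ∧ c = true) → r.nu < r'.nu))

/-- The bicolored Lyndon condition: every internal vertex with internal left child is
Lyndon (`ν (R (L v)) > ν (R v)`) or satisfies `color (L v) > color v`. -/
def wLyn : BT → Prop
  | leaf _ => True
  | node c l r => l.wLyn ∧ r.wLyn ∧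
      (match l with
       | leaf _ => True
       | node c' _ r' => r.nu < r'.nu ∨ c < c')

/-- The pointed element of a bicolored tree: a `1`-colored vertex keeps the point of its
left subtree and a `0`-colored vertex keeps the point of its right subtree. -/
def ppt : BT → ℕ
  | leaf a => a
  | node c l r => if c then l.ppt else r.ppt

end BT

/-- `u`-merging of two pointed Lyndon trees: create a new root of color `u` with the two
trees as subtrees, then repeatedly slide the new vertex together with its right subtree
past its left child until the pointed Lyndon condition holds at the new vertex. -/
def mergeP (u : Bool) : BT → BT → BT
  | BT.leaf a, t2 => BT.node u (BT.leaf a) t2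
  | BT.node c a b, t2 =>
      if u ≤ c ∧ ((c = true ∧ u = true) → t2.nu < b.nu)
      then BT.node u (BT.node c a b) t2
      else BT.node c (mergeP u a t2) b

/-- `u`-merging of two bicolored Lyndon trees: create a new root of color `u` with the two
trees as subtrees, then repeatedly slide the new vertex together with its right subtree
past its left child until the bicolored Lyndon condition holds at the new vertex. -/
def mergeW (u : Bool) : BT → BT → BT
  | BT.leaf a, t2 => BT.node u (BT.leaf a) t2
  | BT.node c a b, t2 =>
      if t2.nu < b.nu ∨ u < c
      then BT.node u (BT.node c a b) t2
      else BT.node c (mergeW u a t2) b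

/-- A valid forest on the ground set `[n]`, each tree normalized and satisfying `P`, the
trees having pairwise disjoint leaf sets which together cover `[n] = {1, …, n}`. -/
def ForestValid (n : ℕ) (P : BT → Prop) (F : Finset BT) : Prop :=
  (∀ t ∈ F, t.normalized ∧ P t) ∧
  (∀ t ∈ F, ∀ t' ∈ F, t ≠ t' → Disjoint t.leaves t'.leaves) ∧
  F.biUnion BT.leaves = Finset.Icc 1 n

/-- The set of pointed Lyndon forests on `[n]`. -/
abbrev FLynP (n : ℕ) : Type := {F : Finset BT // ForestValid n BT.pLyn F}

/-- The set of bicolored Lyndon forests on `[n]`. -/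
abbrev FLynW (n : ℕ) : Type := {F : Finset BT // ForestValid n BT.wLyn F}

/-- The cover relation on forests: `u`-merge two of the trees (the one with smaller minimum
leaf label going to the left). -/
def covForest (merge : Bool → BT → BT → BT) (F F' : Finset BT) : Prop :=
  ∃ t1 ∈ F, ∃ t2 ∈ F, t1.nu < t2.nu ∧ ∃ u : Bool,
    F' = insert (merge u t1 t2) ((F.erase t1).erase t2)

/-- The cover relation of the poset of pointed Lyndon forests `FLyn_n^•`. -/
def covFP {n : ℕ} (F F' : FLynP n) : Prop := covForest mergeP F.1 F'.1

/-- The cover relation of the poset of bicolored Lyndon forests `FLyn_n^w`. -/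
def covFW {n : ℕ} (F F' : FLynW n) : Prop := covForest mergeW F.1 F'.1

/-- The forest of `n` isolated leaves. -/
def botForest (n : ℕ) : Finset BT := (Finset.Icc 1 n).image BT.leaf

theorem botForest_valid (n : ℕ) (P : BT → Prop) (hP : ∀ a, P (BT.leaf a)) :
    ForestValid n P (botForest n) := by
  refine ⟨?_, ?_, ?_⟩
  · intro t ht
    obtain ⟨i, -, rfl⟩ := Finset.mem_image.1 ht
    exact ⟨trivial, hP i⟩
  · intro t ht t' ht' hne
    obtain ⟨i, -, rfl⟩ := Finset.mem_image.1 ht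
    obtain ⟨j, -, rfl⟩ := Finset.mem_image.1 ht'
    have hij : i ≠ j := fun h => hne (by rw [h])
    simp only [BT.leaves]
    simp [Finset.disjoint_left, hij]
  · ext x
    simp [botForest, BT.leaves]

/-- The minimum of the poset of pointed Lyndon forests. -/
def botFP (n : ℕ) : FLynP n := ⟨botForest n, botForest_valid n _ fun _ => trivial⟩

/-- The minimum of the poset of bicolored Lyndon forests. -/
def botFW (n : ℕ) : FLynW n := ⟨botForest n, botForest_valid n _ fun _ => trivial⟩

/-- The rank of a forest: its total number of internal vertices. -/
def rkForest (F : Finset BT) : ℕ := F.sum BT.internals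

/-- The rank function of `FLyn_n^•`. -/
def rkFP {n : ℕ} (F : FLynP n) : ℕ := rkForest F.1

/-- The rank function of `FLyn_n^w`. -/
def rkFW {n : ℕ} (F : FLynW n) : ℕ := rkForest F.1

/-! ## The Whitney dual construction `R_λ(P)` -/

section RPoset

variable {α : Type*} {L : Type*}

/-- Swap the leftmost ascent of a word of labels. -/
noncomputable def swapFirstAscent (lt : L → L → Prop) : List L → List L
  | a :: b :: rest => if lt a b then b :: a :: rest else a :: swapFirstAscent lt (b :: rest)
  | w => w

/-- Sort a word of labels by repeatedly swapping its leftmost ascent until it is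
ascent-free. -/
noncomputable def sortWord (lt : L → L → Prop) (w : List L) : List L :=
  (swapFirstAscent lt)^[w.length * w.length] w

/-- The underlying set of the Whitney dual `R_λ(P)`: pairs `(x, w)` where `w` is the label
word of an ascent-free saturated chain from `0̂` to `x`. -/
abbrev RPoset (cov : α → α → Prop) (lab : α → α → L) (lt : L → L → Prop) (bot : α) : Type _ :=
  {q : α × List L //
    ∃ c, IsSatChain cov bot q.1 c ∧ AscFree lt (wordOf lab c) ∧ wordOf lab c = q.2}

/-- The cover relation of `R_λ(P)`: `(x, w) ⋖ (y, u)` iff `x ⋖ y` and `u` is obtained by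
sorting the label of `x ⋖ y` into `w`. -/
def covR (cov : α → α → Prop) (lab : α → α → L) (lt : L → L → Prop) (bot : α)
    (p q : RPoset cov lab lt bot) : Prop :=
  cov p.1.1 q.1.1 ∧ q.1.2 = sortWord lt (p.1.2 ++ [lab p.1.1 q.1.1])

end RPoset

/-! ## Reiner's poset of rooted spanning forests -/

/-- A rooted spanning forest on `[n]`, encoded by its parent function: `f i` is the parent
of the vertex `i` (`f i = i` for roots), vertices outside `[n]` being fixed, and every
vertex reaching a root after finitely many steps (acyclicity). -/
def SFvalid (n : ℕ) (f : ℕ → ℕ) : Prop :=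
  (∀ i ∈ Finset.Icc 1 n, f i ∈ Finset.Icc 1 n) ∧
  (∀ i, i ∉ Finset.Icc 1 n → f i = i) ∧
  (∀ i, ∃ k, f^[k + 1] i = f^[k] i)

/-- Reiner's poset `SF_n` of rooted spanning forests of the complete graph on `[n]`. -/
abbrev SF (n : ℕ) : Type := {f : ℕ → ℕ // SFvalid n f}

/-- The cover relation of `SF_n`: add an edge between the roots of two trees, one of the
two roots becoming the root of the merged tree. -/
def covSF {n : ℕ} (f g : SF n) : Prop :=
  ∃ r1 ∈ Finset.Icc 1 n, ∃ r2 ∈ Finset.Icc 1 n, r1 ≠ r2 ∧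
    f.1 r1 = r1 ∧ f.1 r2 = r2 ∧
    (g.1 = Function.update f.1 r1 r2 ∨ g.1 = Function.update f.1 r2 r1)

/-- The rank of a rooted spanning forest: its number of edges. -/
def rkSF {n : ℕ} (f : SF n) : ℕ := ((Finset.Icc 1 n).filter fun i => f.1 i ≠ i).card
/-! ## Further constructions used in particular statements -/

/-- The map `Φ` on underlying finsets: a pointed block `(B, q)` of a pointed partition
above `α` is sent to the set of minima of the `α`-blocks contained in `B`, pointed at the
minimum of the `α`-block containing `q`. -/
noncomputable def PhiMap (af : Finset (Finset ℕ × ℕ)) (pf : Finset (Finset ℕ × ℕ)) :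
    Finset (Finset ℕ × ℕ) :=
  pf.image fun b =>
    ((af.filter fun c => c.1 ⊆ b.1).image fun c => minB c.1,
     WithTop.untopD 0 ((af.filter fun c => b.2 ∈ c.1).image fun c => minB c.1).min)

/-- The expected word of labels of the unique increasing maximal chain of the interval
`[0̂, [n]^p]` of the pointed partition poset:
`(1,2)¹ ⋯ (1,n)¹` if `p = 1`, and `(1,p)⁰ (1,2)¹ ⋯ (1,p-1)¹ (1,p+1)¹ ⋯ (1,n)¹` otherwise. -/
def expectedWordP (n p : ℕ) : List (ℕ × ℕ × Bool) :=
  let base := (List.range (n - 1)).map fun i => ((1 : ℕ), i + 2, true)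
  if p = 1 then base else ((1 : ℕ), p, false) :: base.erase (1, p, true)

/-- Merge two words of labels, each with non-increasing first components, into a single
word with non-increasing first components. -/
def mergeByNu : List (ℕ × ℕ × Bool) → List (ℕ × ℕ × Bool) → List (ℕ × ℕ × Bool)
  | [], ys => ys
  | xs, [] => xs
  | x :: xs, y :: ys =>
      if y.1 ≤ x.1 then x :: mergeByNu xs (y :: ys) else y :: mergeByNu (x :: xs) ys
termination_by xs ys => xs.length + ys.length

/-- The word of labels of a tree read along the reverse-minimal linear extension of its
internal vertices: the internal vertex `v` contributes `(ν (L v), ν (R v), color v)`, the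
vertices being listed with non-increasing valencies (descendants first among equal
valencies). -/
def BT.rmword : BT → List (ℕ × ℕ × Bool)
  | BT.leaf _ => []
  | BT.node c l r => mergeByNu l.rmword r.rmword ++ [(l.nu, r.nu, c)]

/-- The word of labels of the saturated chain `c(F)` associated to a forest `F`, read along
the reverse-minimal linear extension of the internal vertices of `F`. -/
noncomputable def forestWord (F : Finset BT) : List (ℕ × ℕ × Bool) :=
  (F.toList.map BT.rmword).foldr mergeByNu []

/-- `TLyn_{n,p}^•`: pointed Lyndon trees on `[n]` whose associated chain ends at `[n]^p`,
i.e. whose tracked pointed element is `p`. -/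
abbrev TLynBullet (n p : ℕ) : Type :=
  {T : BT // T.normalized ∧ T.pLyn ∧ T.leaves = Finset.Icc 1 n ∧ T.ppt = p}

/-- The labeling `λ̃` of `Πₙ•` proposed by Bellier-Millès, Delcroix-Oger and Hoffbeck:
the cover `u`-merging blocks with minima `a < b` in a pointed partition `π` with `|π|`
blocks is labeled `(b, a + n - |π|)` if `u = 0` and `(b, b + n - |π|)` if `u = 1`. -/
noncomputable def labT (n : ℕ) {A : Finset ℕ} (π π' : PPart A) : ℕ × ℕ :=
  let olds := π.1 \ π'.1
  let mins := olds.image fun b => minB b.1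
  let a := WithTop.untopD 0 mins.min
  let b := WithBot.unbotD 0 mins.max
  if ∃ c ∈ olds, minB c.1 = a ∧ ∃ d ∈ π'.1 \ π.1, d.2 = c.2
  then (b, b + n - π.1.card)
  else (b, a + n - π.1.card)

/-- The (strict) lexicographic order on `ℕ × ℕ`. -/
def ltT (x y : ℕ × ℕ) : Prop := x.1 < y.1 ∨ (x.1 = y.1 ∧ x.2 < y.2)



/-! ## Auxiliary machinery for the non-isomorphism theorem -/

section Generic

variable {α β : Type*}

/-- Cover relation of the partial order generated by `cov`. -/
def CovCover (cov : α → α → Prop) (x y : α) : Prop :=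
  ltOf cov x y ∧ ¬ ∃ z, ltOf cov x z ∧ ltOf cov z y

/-- The distinguishing invariant: there is an atom all of whose upper covers
cover some other element as well. -/
def QProp (cov : α → α → Prop) : Prop :=
  ∃ a, (∃ m, (∀ z, leOf cov z m → z = m) ∧ CovCover cov m a) ∧
    ∀ x, CovCover cov a x → ∃ b, b ≠ a ∧ CovCover cov b x

lemma leOf_rank_le {cov : α → α → Prop} {rk : α → ℕ}
    (hrk : ∀ x y, cov x y → rk y = rk x + 1) {x y : α} (h : leOf cov x y) :
    rk x ≤ rk y := by
  induction h with
  | refl => exact le_refl _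
  | tail _ hzy ih => have := hrk _ _ hzy; omega

lemma ltOf_rank_lt {cov : α → α → Prop} {rk : α → ℕ}
    (hrk : ∀ x y, cov x y → rk y = rk x + 1) {x y : α} (h : ltOf cov x y) :
    rk x < rk y := by
  obtain ⟨hle, hne⟩ := h
  rcases Relation.ReflTransGen.cases_head hle with rfl | ⟨z, hxz, hzy⟩
  · exact absurd rfl hne
  · have h1 := hrk _ _ hxz
    have h2 := leOf_rank_le hrk hzy
    omega

lemma covCover_iff {cov : α → α → Prop} {rk : α → ℕ}
    (hrk : ∀ x y, cov x y → rk y = rk x + 1) {x y : α} :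
    CovCover cov x y ↔ cov x y := by
  constructor
  · rintro ⟨⟨hle, hne⟩, hno⟩
    rcases Relation.ReflTransGen.cases_head hle with rfl | ⟨z, hxz, hzy⟩
    · exact absurd rfl hne
    · by_cases hzy' : z = y
      · subst hzy'; exact hxz
      · exfalso
        refine hno ⟨z, ⟨Relation.ReflTransGen.single hxz, ?_⟩, hzy, hzy'⟩
        rintro rfl
        have := hrk _ _ hxz; omega
  · intro h
    refine ⟨⟨Relation.ReflTransGen.single h, ?_⟩, ?_⟩
    · rintro rfl; have := hrk _ _ h; omega
    · rintro ⟨z, h1, h2⟩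
      have := ltOf_rank_lt hrk h1
      have := ltOf_rank_lt hrk h2
      have := hrk _ _ h
      omega

lemma qprop_of_iso {covP : α → α → Prop} {covQ : β → β → Prop}
    (h : CovPosetIso covP covQ) (hq : QProp covP) : QProp covQ := by
  obtain ⟨e, he⟩ := h
  have hlt : ∀ x y, ltOf covP x y ↔ ltOf covQ (e x) (e y) := by
    intro x y
    unfold ltOf
    rw [he]
    simp [EmbeddingLike.apply_eq_iff_eq]
  have hcc : ∀ x y, CovCover covP x y ↔ CovCover covQ (e x) (e y) := by
    intro x y
    unfold CovCover
    rw [hlt]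
    refine and_congr_right fun _ => not_congr ?_
    constructor
    · rintro ⟨z, hz1, hz2⟩
      exact ⟨e z, (hlt _ _).1 hz1, (hlt _ _).1 hz2⟩
    · rintro ⟨z, hz1, hz2⟩
      refine ⟨e.symm z, ?_, ?_⟩
      · rw [hlt]; simpa using hz1
      · rw [hlt]; simpa using hz2
  obtain ⟨a, ⟨m, hmin, hma⟩, hall⟩ := hq
  refine ⟨e a, ⟨e m, ?_, (hcc _ _).1 hma⟩, ?_⟩
  · intro z hz
    have hz' : leOf covP (e.symm z) m := by rw [he]; simpa using hz
    have := hmin _ hz'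
    have : z = e m := by rw [← this]; simp
    exact this
  · intro x hx
    have hx' : CovCover covP a (e.symm x) := by rw [hcc]; simpa using hx
    obtain ⟨b, hb1, hb2⟩ := hall _ hx'
    refine ⟨e b, by simpa using hb1, ?_⟩
    have := (hcc b (e.symm x)).1 hb2
    simpa using this

lemma covPosetIso_symm {covP : α → α → Prop} {covQ : β → β → Prop}
    (h : CovPosetIso covP covQ) : CovPosetIso covQ covP := by
  obtain ⟨e, he⟩ := h
  refine ⟨e.symm, fun x y => ?_⟩
  rw [he (e.symm x) (e.symm y)]
  simp

end Generic

section SFSide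

variable {n : ℕ}

lemma covSF_iff {f g : SF n} : covSF f g ↔
    ∃ r ∈ Finset.Icc 1 n, ∃ s ∈ Finset.Icc 1 n, r ≠ s ∧
      f.1 r = r ∧ f.1 s = s ∧ g.1 = Function.update f.1 r s := by
  constructor
  · rintro ⟨r1, h1, r2, h2, hne, hf1, hf2, hg | hg⟩
    · exact ⟨r1, h1, r2, h2, hne, hf1, hf2, hg⟩
    · exact ⟨r2, h2, r1, h1, hne.symm, hf2, hf1, hg⟩
  · rintro ⟨r, h1, s, h2, hne, hf1, hf2, hg⟩
    exact ⟨r, h1, s, h2, hne, hf1, hf2, Or.inl hg⟩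

lemma rk_covSF {f g : SF n} (h : covSF f g) : rkSF g = rkSF f + 1 := by
  obtain ⟨r, h1, s, h2, hne, hf1, hf2, hg⟩ := covSF_iff.1 h
  have hset : ((Finset.Icc 1 n).filter fun i => g.1 i ≠ i)
      = insert r ((Finset.Icc 1 n).filter fun i => f.1 i ≠ i) := by
    ext i
    by_cases hi : i = r
    · subst hi
      simp [hg, Function.update_self, h1, hne.symm]
    · simp only [Finset.mem_filter, Finset.mem_insert, hi, false_or]
      rw [hg, Function.update_of_ne hi]
  have hrnot : r ∉ (Finset.Icc 1 n).filter fun i => f.1 i ≠ i := by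
    simp [hf1]
  rw [rkSF, rkSF, hset, Finset.card_insert_of_notMem hrnot]

/-- acyclicity is preserved by "lazifying" a function. -/
lemma acyc_lazy_aux {f g : ℕ → ℕ} (hg : ∀ j, g j = f j ∨ g j = j) :
    ∀ k j, f^[k + 1] j = f^[k] j → ∃ m, g^[m + 1] j = g^[m] j := by
  intro k
  induction k with
  | zero =>
    intro j hj
    rcases hg j with h | h
    · exact ⟨0, by simpa [h] using hj⟩
    · exact ⟨0, by simpa [h]⟩
  | succ k ih =>
    intro j hj
    rcases hg j with h | h
    · have hfj : f^[k + 1] (f j) = f^[k] (f j) := by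
        rw [← Function.iterate_succ_apply, ← Function.iterate_succ_apply]
        exact hj
      obtain ⟨m, hm⟩ := ih (f j) hfj
      refine ⟨m + 1, ?_⟩
      have hm' : g^[m + 1] (g j) = g^[m] (g j) := by rw [h]; exact hm
      calc g^[m + 1 + 1] j = g^[m + 1] (g j) := Function.iterate_succ_apply g (m + 1) j
        _ = g^[m] (g j) := hm'
        _ = g^[m + 1] j := (Function.iterate_succ_apply g m j).symm
    · exact ⟨0, by simpa [h]⟩

/-- In an acyclic parent function, from any non-fixed point one finds a vertex whose
parent is a root. -/
lemma exists_pre_root {f : ℕ → ℕ} :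
    ∀ k (i : ℕ), f^[k + 1] i = f^[k] i → f i ≠ i → ∃ c, f c ≠ c ∧ f (f c) = f c := by
  intro k
  induction k with
  | zero => intro i hi hne; exact absurd hi hne
  | succ k ih =>
    intro i hi hne
    by_cases h2 : f (f i) = f i
    · exact ⟨i, hne, h2⟩
    · refine ih (f i) ?_ h2
      rw [← Function.iterate_succ_apply, ← Function.iterate_succ_apply]
      exact hi

lemma min_fixed {m : SF n} (hmin : ∀ z : SF n, leOf covSF z m → z = m) :
    ∀ i, m.1 i = i := by
  by_contra hcon
  push_neg at hcon
  obtain ⟨i, hi⟩ := hcon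
  obtain ⟨k, hk⟩ := m.2.2.2 i
  obtain ⟨c, hc1, hc2⟩ := exists_pre_root k i hk hi
  have hcIcc : c ∈ Finset.Icc 1 n := by
    by_contra h
    exact hc1 (m.2.2.1 c h)
  have hfcIcc : m.1 c ∈ Finset.Icc 1 n := m.2.1 c hcIcc
  set gf : ℕ → ℕ := fun j => if j = c then c else m.1 j with hgf
  have hglazy : ∀ j, gf j = m.1 j ∨ gf j = j := by
    intro j
    by_cases h : j = c
    · subst h; right; simp [hgf]
    · left; simp [hgf, h]
  have hgvalid : SFvalid n gf := by
    refine ⟨?_, ?_, ?_⟩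
    · intro j hj
      rcases hglazy j with h | h
      · rw [h]; exact m.2.1 j hj
      · rw [h]; exact hj
    · intro j hj
      have hjc : j ≠ c := fun h => hj (h ▸ hcIcc)
      simp only [hgf, if_neg hjc]
      exact m.2.2.1 j hj
    · intro j
      obtain ⟨k', hk'⟩ := m.2.2.2 j
      exact acyc_lazy_aux hglazy k' j hk'
  set g : SF n := ⟨gf, hgvalid⟩ with hgdef
  have hcov : covSF g m := by
    refine covSF_iff.2 ⟨c, hcIcc, m.1 c, hfcIcc, fun h => hc1 h.symm, ?_, ?_, ?_⟩
    · simp [hgdef, hgf]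
    · have : m.1 c ≠ c := hc1
      simp [hgdef, hgf, this, hc2]
    · funext j
      by_cases h : j = c
      · subst h; simp [Function.update_self, hgdef, hgf]
      · simp [Function.update_of_ne h, hgdef, hgf, h]
  have hgm := hmin g (Relation.ReflTransGen.single hcov)
  have h2 : g.1 = m.1 := congrArg Subtype.val hgm
  have h3 : gf c = m.1 c := by rw [← h2]
  simp only [hgf, if_pos rfl] at h3
  exact hc1 h3.symm

lemma not_QProp_covSF (n : ℕ) (hn : 3 ≤ n) : ¬ QProp (covSF (n := n)) := by
  have hrk : ∀ f g : SF n, covSF f g → rkSF g = rkSF f + 1 := fun _ _ => rk_covSF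
  rintro ⟨a, ⟨m, hmin, hma⟩, hall⟩
  have hcovma : covSF m a := (covCover_iff hrk).1 hma
  have hmfix := min_fixed hmin
  obtain ⟨p, hp, q, hq, hpq, -, -, ha⟩ := covSF_iff.1 hcovma
  -- a.1 p = q, a.1 j = j otherwise
  have hap : a.1 p = q := by rw [ha]; simp
  have haj : ∀ j, j ≠ p → a.1 j = j := by
    intro j hj; rw [ha, Function.update_of_ne hj]; exact hmfix j
  -- pick z ∈ Icc \ {p, q}
  have hzex : (Finset.Icc 1 n \ {p, q}).Nonempty := by
    rw [← Finset.card_pos]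
    have h1 : (Finset.Icc 1 n).card = n := by simp
    have h2 : ({p, q} : Finset ℕ).card ≤ 2 := Finset.card_insert_le _ _ |>.trans (by simp)
    have := Finset.le_card_sdiff ({p, q} : Finset ℕ) (Finset.Icc 1 n)
    omega
  obtain ⟨z, hz⟩ := hzex
  rw [Finset.mem_sdiff, Finset.mem_insert, Finset.mem_singleton] at hz
  obtain ⟨hzIcc, hzne⟩ := hz
  push_neg at hzne
  obtain ⟨hzp, hzq⟩ := hzne
  -- x := a with extra edge q → z
  set xf : ℕ → ℕ := Function.update a.1 q z with hxf
  have hxp : xf p = q := by rw [hxf, Function.update_of_ne hpq, hap]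
  have hxq : xf q = z := by simp [hxf]
  have hxj : ∀ j, j ≠ p → j ≠ q → xf j = j := by
    intro j h1 h2; rw [hxf, Function.update_of_ne h2]; exact haj j h1
  have hxz : xf z = z := hxj z hzp hzq
  have hxvalid : SFvalid n xf := by
    refine ⟨?_, ?_, ?_⟩
    · intro j hj
      by_cases h2 : j = q
      · subst h2; rw [hxq]; exact hzIcc
      · by_cases h1 : j = p
        · subst h1; rw [hxp]; exact hq
        · rw [hxj j h1 h2]; exact hj
    · intro j hj
      have h1 : j ≠ p := fun h => hj (h ▸ hp)
      have h2 : j ≠ q := fun h => hj (h ▸ hq)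
      exact hxj j h1 h2
    · intro j
      refine ⟨2, ?_⟩
      have key : ∀ w, xf (xf (xf w)) = xf (xf w) := by
        intro w
        by_cases h2 : w = q
        · subst h2; rw [hxq, hxz, hxz]
        · by_cases h1 : w = p
          · subst h1; rw [hxp, hxq, hxz]
          · rw [hxj w h1 h2, hxj w h1 h2, hxj w h1 h2]
      show xf^[3] j = xf^[2] j
      simp only [Function.iterate_succ_apply', Function.iterate_zero_apply,
        Function.iterate_one]
      exact key j
  set x : SF n := ⟨xf, hxvalid⟩ with hxdef
  have hcovax : covSF a x := by
    refine covSF_iff.2 ⟨q, hq, z, hzIcc, hzq.symm, haj q hpq.symm, haj z hzp, rfl⟩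
  obtain ⟨b, hbne, hbx⟩ := hall x ((covCover_iff hrk).2 hcovax)
  have hcovbx : covSF b x := (covCover_iff hrk).1 hbx
  obtain ⟨r, hr, s, hs, hrs, hbr, hbs, hx'⟩ := covSF_iff.1 hcovbx
  have hxr : xf r = s := by
    show x.1 r = s
    rw [hx']; simp
  have hxs : xf s = s := by
    show x.1 s = s
    rw [hx', Function.update_of_ne (fun h => hrs h.symm)]
    exact hbs
  -- r must be p or q
  have hrp : r ≠ p := by
    rintro rfl
    rw [hxp] at hxr
    subst hxr
    rw [hxq] at hxs
    exact hzq hxs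
  have hrq : r = q := by
    by_contra hrq
    rw [hxj r hrp hrq] at hxr
    exact hrs hxr
  -- then b = a
  apply hbne
  apply Subtype.ext
  funext j
  by_cases h2 : j = r
  · have hrp' : r ≠ p := by rw [hrq]; exact hpq.symm
    rw [h2, hbr, haj r hrp']
  · have hbj : x.1 j = b.1 j := by rw [hx', Function.update_of_ne h2]
    rw [← hbj]
    show xf j = a.1 j
    rw [hxf, Function.update_of_ne (by rw [← hrq]; exact h2)]

end SFSide

section FWSide

lemma BT.leaf_injective : Function.Injective BT.leaf := fun a b h => by injection h

lemma BT.leaves_nonempty (t : BT) : t.leaves.Nonempty := by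
  induction t with
  | leaf a => exact ⟨a, by simp [BT.leaves]⟩
  | node c l r ihl ihr =>
    show (l.leaves ∪ r.leaves).Nonempty
    exact ihl.mono Finset.subset_union_left

lemma internals_mergeW (u : Bool) (t1 t2 : BT) :
    (mergeW u t1 t2).internals = t1.internals + t2.internals + 1 := by
  induction t1 with
  | leaf a => simp [mergeW, BT.internals]
  | node c l r ihl ihr =>
    rw [mergeW]
    split_ifs
    · simp [BT.internals]
    · show (mergeW u l t2).internals + r.internals + 1 = _
      rw [ihl]
      show _ = l.internals + r.internals + 1 + t2.internals + 1
      omega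

lemma leaves_mergeW (u : Bool) (t1 t2 : BT) :
    (mergeW u t1 t2).leaves = t1.leaves ∪ t2.leaves := by
  induction t1 with
  | leaf a => simp [mergeW, BT.leaves]
  | node c l r ihl ihr =>
    rw [mergeW]
    split_ifs
    · rfl
    · show (mergeW u l t2).leaves ∪ r.leaves = (l.leaves ∪ r.leaves) ∪ t2.leaves
      rw [ihl, Finset.union_right_comm]

lemma rk_covFW {n : ℕ} (F F' : FLynW n) (h : covFW F F') : rkFW F' = rkFW F + 1 := by
  obtain ⟨t1, ht1, t2, ht2, hnu, u, hF'⟩ := h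
  have hne12 : t1 ≠ t2 := fun h => by subst h; exact lt_irrefl _ hnu
  have hmnot : mergeW u t1 t2 ∉ (F.1.erase t1).erase t2 := by
    intro hm
    obtain ⟨hne2, hm1⟩ := Finset.mem_erase.1 hm
    obtain ⟨hne1, hmF⟩ := Finset.mem_erase.1 hm1
    have hdisj := F.2.2.1 _ hmF t1 ht1 hne1
    obtain ⟨x, hx⟩ := t1.leaves_nonempty
    have hxm : x ∈ (mergeW u t1 t2).leaves := by
      rw [leaves_mergeW]; exact Finset.mem_union_left _ hx
    exact Finset.disjoint_left.1 hdisj hxm hx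
  have ht2' : t2 ∈ F.1.erase t1 := Finset.mem_erase.2 ⟨hne12.symm, ht2⟩
  have h1 : ((F.1.erase t1).erase t2).sum BT.internals + t2.internals
      = (F.1.erase t1).sum BT.internals := Finset.sum_erase_add _ _ ht2'
  have h2 : (F.1.erase t1).sum BT.internals + t1.internals = F.1.sum BT.internals :=
    Finset.sum_erase_add _ _ ht1
  have h3 : F'.1.sum BT.internals
      = (mergeW u t1 t2).internals + ((F.1.erase t1).erase t2).sum BT.internals := by
    rw [hF']; exact Finset.sum_insert hmnot
  have h4 := internals_mergeW u t1 t2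
  show F'.1.sum BT.internals = F.1.sum BT.internals + 1
  omega

/-- The forest consisting of the tree `T` together with singleton leaves. -/
def withTree (n : ℕ) (T : BT) : Finset BT :=
  insert T ((Finset.Icc 1 n \ T.leaves).image BT.leaf)

lemma mem_withTree {n : ℕ} {T t : BT} :
    t ∈ withTree n T ↔ t = T ∨ ∃ i, (i ∈ Finset.Icc 1 n ∧ i ∉ T.leaves) ∧ BT.leaf i = t := by
  simp [withTree]

lemma withTree_valid (n : ℕ) (T : BT) (h1 : T.normalized) (h2 : T.wLyn)
    (h3 : T.leaves ⊆ Finset.Icc 1 n) : ForestValid n BT.wLyn (withTree n T) := by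
  refine ⟨?_, ?_, ?_⟩
  · intro t ht
    rcases mem_withTree.1 ht with rfl | ⟨i, -, rfl⟩
    · exact ⟨h1, h2⟩
    · exact ⟨trivial, trivial⟩
  · intro t ht t' ht' hne
    rcases mem_withTree.1 ht with rfl | ⟨i, hi, rfl⟩ <;>
      rcases mem_withTree.1 ht' with rfl | ⟨j, hj, rfl⟩
    · exact absurd rfl hne
    · show Disjoint t.leaves (BT.leaf j).leaves
      show Disjoint t.leaves {j}
      exact Finset.disjoint_singleton_right.2 hj.2
    · show Disjoint ({i} : Finset ℕ) t'.leaves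
      exact Finset.disjoint_singleton_left.2 hi.2
    · have hij : i ≠ j := fun h => hne (by rw [h])
      show Disjoint ({i} : Finset ℕ) {j}
      exact Finset.disjoint_singleton.2 hij
  · ext x
    simp only [Finset.mem_biUnion]
    constructor
    · rintro ⟨t, htm, hx⟩
      rcases mem_withTree.1 htm with rfl | ⟨i, hi, rfl⟩
      · exact h3 hx
      · have : x = i := by simpa [BT.leaves] using hx
        subst this; exact hi.1
    · intro hx
      by_cases hT : x ∈ T.leaves
      · exact ⟨T, mem_withTree.2 (Or.inl rfl), hT⟩
      · refine ⟨BT.leaf x, mem_withTree.2 (Or.inr ⟨x, ⟨hx, hT⟩, rfl⟩), ?_⟩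
        simp [BT.leaves]

/-- A cherry. -/
def cherry (u : Bool) (a b : ℕ) : BT := BT.node u (BT.leaf a) (BT.leaf b)

lemma cherry_ne_leaf (u : Bool) (a b : ℕ) : ∀ i, cherry u a b ≠ BT.leaf i := by
  intro i h; exact BT.noConfusion h

lemma cherry_normalized {u : Bool} {a b : ℕ} (h : a < b) : (cherry u a b).normalized := by
  refine ⟨trivial, trivial, ?_, h⟩
  show Disjoint ({a} : Finset ℕ) {b}
  exact Finset.disjoint_singleton.2 h.ne

lemma cherry_wLyn (u : Bool) (a b : ℕ) : (cherry u a b).wLyn :=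
  ⟨trivial, trivial, trivial⟩

lemma cherry_leaves_subset {n : ℕ} {u : Bool} {a b : ℕ} (ha : a ∈ Finset.Icc 1 n)
    (hb : b ∈ Finset.Icc 1 n) : (cherry u a b).leaves ⊆ Finset.Icc 1 n := by
  intro x hx
  have : x = a ∨ x = b := by simpa [cherry, BT.leaves] using hx
  rcases this with rfl | rfl <;> assumption

/-- The atom of `FLynₙʷ` given by a single cherry. -/
def atomFW (n : ℕ) (u : Bool) (a b : ℕ) (hab : a < b) (ha : a ∈ Finset.Icc 1 n)
    (hb : b ∈ Finset.Icc 1 n) : FLynW n :=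
  ⟨withTree n (cherry u a b),
    withTree_valid n _ (cherry_normalized hab) (cherry_wLyn u a b)
      (cherry_leaves_subset ha hb)⟩

lemma withTree_erase_step {n : ℕ} (T : BT) (hT : ∀ i, T ≠ BT.leaf i) (j : ℕ) :
    ((withTree n T).erase T).erase (BT.leaf j)
      = (((Finset.Icc 1 n \ T.leaves)).erase j).image BT.leaf := by
  have hTnot : T ∉ (Finset.Icc 1 n \ T.leaves).image BT.leaf := by
    simp only [Finset.mem_image]
    rintro ⟨i, -, hi⟩
    exact hT i hi.symm
  rw [Finset.image_erase BT.leaf_injective, withTree, Finset.erase_insert hTnot]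

lemma withTree_erase_leaf {n : ℕ} (T : BT) (hT : ∀ i, T ≠ BT.leaf i) (i j : ℕ) :
    ((withTree n T).erase (BT.leaf i)).erase (BT.leaf j)
      = insert T ((((Finset.Icc 1 n \ T.leaves).erase i).erase j).image BT.leaf) := by
  rw [withTree, Finset.erase_insert_of_ne (hT i), Finset.erase_insert_of_ne (hT j),
    ← Finset.image_erase BT.leaf_injective, ← Finset.image_erase BT.leaf_injective]

lemma rkFW_bot (n : ℕ) : rkFW (botFW n) = 0 := by
  show rkForest (botForest n) = 0
  apply Finset.sum_eq_zero
  intro t ht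
  obtain ⟨i, -, rfl⟩ := Finset.mem_image.1 ht
  rfl

end FWSide

def aFW (n : ℕ) (hn : 3 ≤ n) : FLynW n :=
  atomFW n false 1 2 (by omega) (Finset.mem_Icc.2 ⟨by omega, by omega⟩)
    (Finset.mem_Icc.2 ⟨by omega, by omega⟩)

lemma covFW_bot_atom (n : ℕ) (hn : 3 ≤ n) : covFW (botFW n) (aFW n hn) := by
  have h1n : (1:ℕ) ∈ Finset.Icc 1 n := Finset.mem_Icc.2 ⟨by omega, by omega⟩
  have h2n : (2:ℕ) ∈ Finset.Icc 1 n := Finset.mem_Icc.2 ⟨by omega, by omega⟩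
  show covForest mergeW (botForest n) (withTree n (cherry false 1 2))
  refine ⟨BT.leaf 1, Finset.mem_image_of_mem _ h1n, BT.leaf 2,
    Finset.mem_image_of_mem _ h2n, ?_, false, ?_⟩
  · show (1:ℕ) < 2
    omega
  · have h2 : (((Finset.Icc 1 n).erase 1).erase 2).image BT.leaf
        = ((botForest n).erase (BT.leaf 1)).erase (BT.leaf 2) := by
      rw [Finset.image_erase BT.leaf_injective, Finset.image_erase BT.leaf_injective]
      rfl
    rw [← h2]
    show insert (cherry false 1 2) ((Finset.Icc 1 n \ (cherry false 1 2).leaves).image BT.leaf)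
        = insert (cherry false 1 2) ((((Finset.Icc 1 n).erase 1).erase 2).image BT.leaf)
    congr 1
    congr 1
    ext k
    simp [cherry, BT.leaves]
    omega

lemma qprop_covFW (n : ℕ) (hn : 3 ≤ n) : QProp (covFW (n := n)) := by
  have hrk : ∀ F F' : FLynW n, covFW F F' → rkFW F' = rkFW F + 1 := rk_covFW
  have h1n : (1:ℕ) ∈ Finset.Icc 1 n := Finset.mem_Icc.2 ⟨by omega, by omega⟩
  have h2n : (2:ℕ) ∈ Finset.Icc 1 n := Finset.mem_Icc.2 ⟨by omega, by omega⟩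
  refine ⟨aFW n hn, ⟨botFW n, ?_, ?_⟩, ?_⟩
  · intro z hz
    by_contra hne
    have := ltOf_rank_lt hrk ⟨hz, hne⟩
    rw [rkFW_bot] at this
    omega
  · exact (covCover_iff hrk).2 (covFW_bot_atom n hn)
  · intro x hx
    have hcov : covForest mergeW (aFW n hn).1 x.1 := (covCover_iff hrk).1 hx
    obtain ⟨t1, ht1, t2, ht2, hnu, u, hxeq⟩ := hcov
    have ha1 : (aFW n hn).1 = withTree n (cherry false 1 2) := rfl
    rw [ha1] at ht1 ht2
    rcases mem_withTree.1 ht1 with rfl | ⟨i, hi, rfl⟩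
    · rcases mem_withTree.1 ht2 with rfl | ⟨m, hm, rfl⟩
      · exact absurd hnu (lt_irrefl _)
      · -- Case A : merge the cherry with a leaf m
        have hmIcc := hm.1
        have hm12 : m ≠ 1 ∧ m ≠ 2 := by
          have h := hm.2
          simp [cherry, BT.leaves] at h
          exact h
        have hmn := Finset.mem_Icc.1 hmIcc
        have hm3 : 3 ≤ m := by omega
        have hcond : ¬((BT.leaf m).nu < (BT.leaf 2).nu ∨ u < false) := by
          simp [BT.nu, Bool.lt_iff]
          omega
        have hmerge : mergeW u (cherry false 1 2) (BT.leaf m)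
            = BT.node false (cherry u 1 m) (BT.leaf 2) := by
          rw [cherry, mergeW, if_neg hcond]
          rfl
        refine ⟨atomFW n u 1 m (by omega) h1n hmIcc, ?_, ?_⟩
        · intro h
          have h0 : cherry u 1 m ∈ (atomFW n u 1 m (by omega) h1n hmIcc).1 :=
            Finset.mem_insert_self _ _
          rw [h] at h0
          rcases mem_withTree.1 h0 with heq | ⟨k, -, heq⟩
          · rw [cherry, cherry] at heq
            injection heq with hu hl hr
            injection hr with hm2
            omega
          · exact BT.noConfusion heq
        · refine (covCover_iff hrk).2 ?_
          show covForest mergeW (withTree n (cherry u 1 m)) x.1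
          refine ⟨cherry u 1 m, Finset.mem_insert_self _ _, BT.leaf 2, ?_, ?_, false, ?_⟩
          · refine mem_withTree.2 (Or.inr ⟨2, ⟨h2n, ?_⟩, rfl⟩)
            simp [cherry, BT.leaves]
            omega
          · show min 1 m < 2
            omega
          · have hcond2 : (BT.leaf 2).nu < (BT.leaf m).nu ∨ false < u :=
              Or.inl (show (2:ℕ) < m by omega)
            have hmerge2 : mergeW false (cherry u 1 m) (BT.leaf 2)
                = BT.node false (cherry u 1 m) (BT.leaf 2) := by
              rw [cherry, mergeW, if_pos hcond2]
            rw [hxeq, hmerge, hmerge2, ha1,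
              withTree_erase_step _ (cherry_ne_leaf _ _ _) m]
            show insert (BT.node false (cherry u 1 m) (BT.leaf 2)) _
              = insert (BT.node false (cherry u 1 m) (BT.leaf 2))
                (((withTree n (cherry u 1 m)).erase (cherry u 1 m)).erase (BT.leaf 2))
            rw [withTree_erase_step _ (cherry_ne_leaf _ _ _) 2]
            congr 2
            ext k
            simp [cherry, BT.leaves]
            omega
    · rcases mem_withTree.1 ht2 with rfl | ⟨j, hj, rfl⟩
      · -- t2 is the cherry : impossible since nu (leaf i) ≥ 1
        have hi1 : i < 1 := by simpa [cherry, BT.nu] using hnu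
        have := Finset.mem_Icc.1 hi.1
        omega
      · -- Case B : merge two leaves i < j
        have hiIcc := hi.1
        have hjIcc := hj.1
        have hi12 : i ≠ 1 ∧ i ≠ 2 := by
          have h := hi.2
          simp [cherry, BT.leaves] at h
          exact h
        have hj12 : j ≠ 1 ∧ j ≠ 2 := by
          have h := hj.2
          simp [cherry, BT.leaves] at h
          exact h
        have hij : i < j := hnu
        refine ⟨atomFW n u i j hij hiIcc hjIcc, ?_, ?_⟩
        · intro h
          have h0 : cherry u i j ∈ (atomFW n u i j hij hiIcc hjIcc).1 :=
            Finset.mem_insert_self _ _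
          rw [h] at h0
          have h0' : cherry u i j ∈ withTree n (cherry false 1 2) := h0
          rcases mem_withTree.1 h0' with heq | ⟨k, -, heq⟩
          · rw [cherry, cherry] at heq
            injection heq with hu hl hr
            injection hl with hi1
            exact hi12.1 hi1
          · exact BT.noConfusion heq
        · refine (covCover_iff hrk).2 ?_
          show covForest mergeW (withTree n (cherry u i j)) x.1
          refine ⟨BT.leaf 1, ?_, BT.leaf 2, ?_, ?_, false, ?_⟩
          · refine mem_withTree.2 (Or.inr ⟨1, ⟨h1n, ?_⟩, rfl⟩)
            simp [cherry, BT.leaves]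
            omega
          · refine mem_withTree.2 (Or.inr ⟨2, ⟨h2n, ?_⟩, rfl⟩)
            simp [cherry, BT.leaves]
            omega
          · show (1:ℕ) < 2
            omega
          · rw [hxeq, ha1, withTree_erase_leaf _ (cherry_ne_leaf _ _ _) i j]
            show insert (cherry u i j)
                (insert (cherry false 1 2)
                  ((((Finset.Icc 1 n \ (cherry false 1 2).leaves).erase i).erase j).image
                    BT.leaf))
              = insert (cherry false 1 2)
                (((withTree n (cherry u i j)).erase (BT.leaf 1)).erase (BT.leaf 2))
            rw [withTree_erase_leaf _ (cherry_ne_leaf _ _ _) 1 2, Finset.insert_comm]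
            congr 3
            ext k
            simp [cherry, BT.leaves]
            omega

/-- For all `n ≥ 3`, the poset of bicolored Lyndon forests `FLynₙʷ` and
Reiner's poset of rooted spanning forests `SFₙ` are not isomorphic as posets. -/
theorem FLynW_not_iso_SF (n : ℕ) (hn : 3 ≤ n) :
    ¬ CovPosetIso (covFW (n := n)) (covSF (n := n)) := by
  intro h
  exact not_QProp_covSF n hn (qprop_of_iso h (qprop_covFW n hn))
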